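/- Every directed multigraph G can be edge-decomposed into k spanning subgraphs G_1, …, G_k such that for each vertex v and each i, |d⁺_{G_i}(v) − d⁺_G(v)/k| < 1 and |d⁻_{G_i}(v) − d⁻_G(v)/k| < 1, and moreover | |E(G_i)| − |E(G)|/k | < 1 for each i. -/

import Mathlib

open Finset

variable {V E : Type*}

/-- Out-degree of `v` in the sub-digraph given by arc set `S`; `ends e = (tail, head)`. -/
def outdeg [DecidableEq V] (ends : E → V × V) (S : Finset E) (v : V) : ℕ :=
  (S.filter fun e => (ends e).1 = v).card

/-- In-degree of `v` in the sub-digraph given by arc set `S`. -/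
def indeg [DecidableEq V] (ends : E → V × V) (S : Finset E) (v : V) : ℕ :=
  (S.filter fun e => (ends e).2 = v).card


namespace DEF

attribute [local instance] Classical.propDecidable

variable {α β : Type*}

lemma ncard_filter [Fintype α] (p : α → Prop) :
    Nat.card {x // p x} = (univ.filter p).card := by
  rw [Nat.card_eq_fintype_card, Fintype.card_subtype]

lemma ncard_split [Finite α] (p q : α → Prop) :
    Nat.card {x // p x ∧ q x} + Nat.card {x // p x ∧ ¬ q x} = Nat.card {x // p x} := by
  rw [← Nat.card_sum]
  refine Nat.card_congr ⟨?_, ?_, ?_, ?_⟩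
  · rintro (⟨x, hx⟩ | ⟨x, hx⟩)
    · exact ⟨x, hx.1⟩
    · exact ⟨x, hx.1⟩
  · rintro ⟨x, hx⟩
    exact if h : q x then Sum.inl ⟨x, hx, h⟩ else Sum.inr ⟨x, hx, h⟩
  · rintro (⟨x, hx⟩ | ⟨x, hx⟩) <;> simp [hx.2]
  · rintro ⟨x, hx⟩
    by_cases h : q x <;> simp [h]

lemma ncard_unique {p : α → Prop} (h : ∃ x, p x ∧ ∀ y, p y → y = x) :
    Nat.card {x // p x} = 1 := by
  obtain ⟨x, hx, hu⟩ := h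
  have e : {y // p y} ≃ Unit :=
    ⟨fun _ => Unit.unit, fun _ => ⟨x, hx⟩, fun ⟨y, hy⟩ => by simp [hu y hy], fun _ => rfl⟩
  rw [Nat.card_congr e, Nat.card_eq_fintype_card]
  simp

lemma ncard_empty {p : α → Prop} (h : ∀ x, ¬ p x) :
    Nat.card {x // p x} = 0 := by
  have : IsEmpty {x // p x} := ⟨fun ⟨x, hx⟩ => h x hx⟩
  simp

lemma ncard_true {p : α → Prop} (h : ∀ x, p x) :
    Nat.card {x // p x} = Nat.card α :=
  Nat.card_congr (Equiv.subtypeUnivEquiv h)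

lemma ncard_sum [Finite α] [Finite β] (p : α ⊕ β → Prop) :
    Nat.card {x : α ⊕ β // p x}
      = Nat.card {a // p (Sum.inl a)} + Nat.card {b // p (Sum.inr b)} := by
  rw [← Nat.card_sum]
  refine Nat.card_congr ⟨?_, ?_, ?_, ?_⟩
  · rintro ⟨(a | b), h⟩
    · exact Sum.inl ⟨a, h⟩
    · exact Sum.inr ⟨b, h⟩
  · rintro (⟨a, h⟩ | ⟨b, h⟩)
    · exact ⟨Sum.inl a, h⟩
    · exact ⟨Sum.inr b, h⟩
  · rintro ⟨(a | b), h⟩ <;> rfl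
  · rintro (⟨a, h⟩ | ⟨b, h⟩) <;> rfl

lemma ncard_fiberwise [Fintype α] [Fintype β] (f : α → β) (q : α → Prop) :
    Nat.card {x // q x} = ∑ b : β, Nat.card {x // f x = b ∧ q x} := by
  have h : ∀ b : β, Nat.card {x // f x = b ∧ q x} = ((univ.filter q).filter (fun x => f x = b)).card := by
    intro b
    rw [ncard_filter]
    refine Finset.card_bij (fun x _ => x) ?_ ?_ ?_
    · intro x hx; simp at hx ⊢; tauto
    · intro a _ b _ hab; exact hab
    · intro x hx; simp at hx; exact ⟨x, by simp; tauto, rfl⟩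
  simp only [h]
  rw [ncard_filter]
  exact Finset.card_eq_sum_card_fiberwise (f := f) (t := univ) (fun x _ => mem_univ _)

lemma ncard_mono_inj [Finite β] {p : α → Prop} {q : β → Prop}
    (f : α → β) (hf : Function.Injective f) (h : ∀ x, p x → q (f x)) :
    Nat.card {x // p x} ≤ Nat.card {y // q y} := by
  have := Fintype.ofFinite β
  have : Fintype {y // q y} := Fintype.ofFinite _
  have : Fintype {x // p x} := Fintype.ofInjective
    (fun x : {x // p x} => (⟨f x.1, h x.1 x.2⟩ : {y // q y}))
    (fun ⟨x, _⟩ ⟨y, _⟩ hxy => Subtype.ext (hf (congrArg Subtype.val hxy)))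
  rw [Nat.card_eq_fintype_card, Nat.card_eq_fintype_card]
  exact Fintype.card_le_of_injective (fun ⟨x, hx⟩ => ⟨f x, h x hx⟩)
    (fun ⟨x, _⟩ ⟨y, _⟩ hxy => Subtype.ext (hf (congrArg Subtype.val hxy)))

lemma nat_div_eq_iff {k c j : ℕ} (hk : 0 < k) :
    j / k = c ↔ c * k ≤ j ∧ j < c * k + k := by
  constructor
  · rintro rfl
    refine ⟨Nat.div_mul_le_self j k, ?_⟩
    have h2 : j % k < k := Nat.mod_lt j hk
    have h3 : j < k * (j / k) + k := by
      conv_lhs => rw [← Nat.div_add_mod j k]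
      exact Nat.add_lt_add_left h2 _
    rwa [Nat.mul_comm] at h3
  · rintro ⟨h1, h2⟩
    refine Nat.div_eq_of_lt_le h1 ?_
    calc j < c * k + k := h2
      _ = (c + 1) * k := by ring

/-- count of `j < d` with `j / k = c`. -/
lemma card_div_fiber {d k c : ℕ} (hk : 0 < k) :
    Nat.card {j : Fin d // j.val / k = c} = min d (c * k + k) - min d (c * k) := by
  obtain ⟨P, hP⟩ : ∃ P, P = c * k := ⟨_, rfl⟩
  rw [← hP, ncard_filter]
  refine Eq.trans (Finset.card_bij (fun (j : Fin d) _ => j.val) ?_ ?_ ?_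
    (t := Finset.Ico (min d P) (min d (P + k)))) ?_
  · intro j hj
    simp only [Finset.mem_filter, Finset.mem_univ, true_and] at hj
    rw [nat_div_eq_iff hk, ← hP] at hj
    have := j.isLt
    simp only [Finset.mem_Ico]
    omega
  · intro a _ b _ hab; exact Fin.ext hab
  · intro b hb
    simp only [Finset.mem_Ico] at hb
    have hbd : b < d := by omega
    refine ⟨⟨b, hbd⟩, ?_, rfl⟩
    simp only [Finset.mem_filter, Finset.mem_univ, true_and]
    rw [nat_div_eq_iff hk, ← hP]
    omega
  · rw [Nat.card_Ico]


lemma filter_card_eq_ncard [Fintype α] {p : α → Prop} [DecidablePred p] :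
    (univ.filter p).card = Nat.card {x // p x} := by
  rw [Nat.card_eq_fintype_card]
  exact (Fintype.card_subtype p).symm

lemma ncard_congr_iff {p q : α → Prop} (h : ∀ x, p x ↔ q x) :
    Nat.card {x // p x} = Nat.card {x // q x} :=
  Nat.card_congr (Equiv.subtypeEquivRight h)

def swapMid {a b c d : Type*} : (a ⊕ (b ⊕ (c ⊕ d))) ≃ (a ⊕ (c ⊕ (b ⊕ d))) where
  toFun x := match x with
    | .inl e => .inl e
    | .inr (.inl j) => .inr (.inr (.inl j))
    | .inr (.inr (.inl j)) => .inr (.inl j)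
    | .inr (.inr (.inr j)) => .inr (.inr (.inr j))
  invFun x := match x with
    | .inl e => .inl e
    | .inr (.inl j) => .inr (.inr (.inl j))
    | .inr (.inr (.inl j)) => .inr (.inl j)
    | .inr (.inr (.inr j)) => .inr (.inr (.inr j))
  left_inv x := by rcases x with e | (j | (j | j)) <;> rfl
  right_inv x := by rcases x with e | (j | (j | j)) <;> rfl

lemma arith6 {k m ρ X1 X2 X3 X4 X5 X6 X7 : ℕ}
    (H1 : X1 + (X2 + (X3 + X4)) = X5)
    (H2 : X2 + X4 = X6 + k)
    (H3 : X3 + X4 = X7 + k)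
    (H4 : X4 ≤ k)
    (H5 : ρ = 0 → X4 = k)
    (H6 : m + (X6 + ρ + (X7 + ρ + (k - ρ))) = X5)
    (H9 : ρ < k) :
    X1 < m + k ∧ m < X1 + k := by
  rcases Nat.eq_zero_or_pos ρ with h | h
  · have := H5 h
    omega
  · omega


end DEF

namespace COL

open DEF

universe uu vv ww

lemma card_eq_mul {F : Type ww} {G : Type uu} [Fintype F] [Fintype G] (f : F → G) (n : ℕ)
    (h : ∀ x, Nat.card {e // f e = x} = n) : Fintype.card F = n * Fintype.card G := by
  classical
  rw [Finset.card_univ.symm, Finset.card_eq_sum_card_fiberwise (f := f) (t := univ)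
    (fun x _ => mem_univ _)]
  have hx : ∀ x : G, (univ.filter (fun e => f e = x)).card = n := by
    intro x
    rw [← ncard_filter]
    exact h x
  rw [Finset.sum_congr rfl (fun x _ => hx x), Finset.sum_const, smul_eq_mul, mul_comm,
    Finset.card_univ]

/-- A `k`-regular bipartite multigraph (edges `F`, endpoints `fA`, `fB`) has a proper
`k`-edge-coloring, i.e. each vertex sees each color exactly once. -/
theorem exists_proper : ∀ (k : ℕ) (A : Type uu) (B : Type vv) (F : Type ww) [Fintype A] [Fintype B] [Fintype F]
    (fA : F → A) (fB : F → B)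
    (hA : ∀ a, Nat.card {e // fA e = a} = k) (hB : ∀ b, Nat.card {e // fB e = b} = k),
    ∃ col : F → Fin k,
      (∀ a i, Nat.card {e // fA e = a ∧ col e = i} = 1) ∧
      (∀ b i, Nat.card {e // fB e = b ∧ col e = i} = 1) := by
  intro k
  induction k with
  | zero =>
    intro A B F _ _ _ fA fB hA hB
    have hF : IsEmpty F := by
      by_contra h
      rw [not_isEmpty_iff] at h
      obtain ⟨e⟩ := h
      have h1 := hA (fA e)
      have h2 : Nat.card {x // fA x = fA e} ≠ 0 := by
        have hne : Nonempty {x // fA x = fA e} := ⟨⟨e, rfl⟩⟩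
        haveI hfin : Finite {x // fA x = fA e} := Subtype.finite
        rw [Nat.card_ne_zero]
        exact ⟨hne, hfin⟩
      omega
    exact ⟨fun e => hF.elim e, fun a i => i.elim0, fun b i => i.elim0⟩
  | succ k ih =>
    intro A B F _ _ _ fA fB hA hB
    classical
    -- Hall's condition
    set t : A → Finset B := fun a => (univ.filter (fun e => fA e = a)).image fB with ht
    have hall : ∀ s : Finset A, s.card ≤ (s.biUnion t).card := by
      intro s
      have hcount : ∀ (u : Finset A), (univ.filter (fun e => fA e ∈ u)).card = (k+1) * u.card := by
        intro u
        rw [Finset.card_eq_sum_card_fiberwise (f := fA) (s := univ.filter (fun e => fA e ∈ u)) (t := u)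
          (fun x hx => (Finset.mem_filter.mp hx).2)]
        rw [Finset.sum_congr rfl (fun a ha => ?_), Finset.sum_const, smul_eq_mul, mul_comm]
        have h0 := hA a
        rw [ncard_filter] at h0
        rw [← h0]
        congr 1
        ext e
        simp only [Finset.mem_filter, Finset.mem_univ, true_and]
        exact ⟨fun h => h.2, fun h => ⟨by rw [h]; exact ha, h⟩⟩
      have hsub : (univ.filter (fun e => fA e ∈ s)) ⊆ (univ.filter (fun e => fB e ∈ s.biUnion t)) := by
        intro e he
        simp only [Finset.mem_filter, Finset.mem_univ, true_and] at he ⊢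
        exact Finset.mem_biUnion.mpr ⟨fA e, he, Finset.mem_image.mpr
          ⟨e, Finset.mem_filter.mpr ⟨mem_univ _, rfl⟩, rfl⟩⟩
      have hBcount : (univ.filter (fun e => fB e ∈ s.biUnion t)).card = (k+1) * (s.biUnion t).card := by
        rw [Finset.card_eq_sum_card_fiberwise (f := fB) (s := univ.filter (fun e => fB e ∈ s.biUnion t)) (t := s.biUnion t)
          (fun x hx => (Finset.mem_filter.mp hx).2)]
        rw [Finset.sum_congr rfl (fun b hb => ?_), Finset.sum_const, smul_eq_mul, mul_comm]
        have h0 := hB b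
        rw [ncard_filter] at h0
        rw [← h0]
        congr 1
        ext e
        simp only [Finset.mem_filter, Finset.mem_univ, true_and]
        exact ⟨fun h => h.2, fun h => ⟨by rw [h]; exact hb, h⟩⟩
      have h1 := hcount s
      have h2 := Finset.card_le_card hsub
      rw [h1, hBcount] at h2
      exact Nat.le_of_mul_le_mul_left (by linarith) (Nat.succ_pos k)
    obtain ⟨g, hginj, hgmem⟩ := (Finset.all_card_le_biUnion_card_iff_exists_injective t).mp hall
    -- select an edge realizing g a
    have hsel : ∀ a, ∃ e, fA e = a ∧ fB e = g a := by
      intro a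
      have := hgmem a
      rw [ht] at this
      simp only [Finset.mem_image, Finset.mem_filter, Finset.mem_univ, true_and] at this
      obtain ⟨e, h1, h2⟩ := this
      exact ⟨e, h1, h2⟩
    choose sel hselA hselB using hsel
    -- g is surjective
    have hcardAB : Fintype.card A = Fintype.card B := by
      have hA2 := card_eq_mul fA (k+1) hA
      have hB2 := card_eq_mul fB (k+1) hB
      exact Nat.eq_of_mul_eq_mul_left (Nat.succ_pos k) (hA2.symm.trans hB2)

    have hgsurj : Function.Surjective g :=
      ((Fintype.bijective_iff_injective_and_card g).mpr ⟨hginj, hcardAB⟩).2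
    -- remove selected edges
    set P : F → Prop := fun x => ∃ a, x = sel a with hP
    have hPsel : ∀ a, P (sel a) := fun a => ⟨a, rfl⟩
    have hselinj : Function.Injective sel := by
      intro a b hab
      have := hselA a
      rw [hab, hselA b] at this
      exact this.symm
    -- fiber of chosen edges over a vertex a has exactly one element
    have huniqA : ∀ a, Nat.card {x // fA x = a ∧ P x} = 1 := by
      intro a
      refine ncard_unique ⟨sel a, ⟨hselA a, hPsel a⟩, ?_⟩
      rintro y ⟨hy1, a', rfl⟩
      rw [hselA a'] at hy1
      rw [hy1]
    have huniqB : ∀ b, Nat.card {x // fB x = b ∧ P x} = 1 := by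
      intro b
      obtain ⟨a, rfl⟩ := hgsurj b
      refine ncard_unique ⟨sel a, ⟨hselB a, hPsel a⟩, ?_⟩
      rintro y ⟨hy1, a', rfl⟩
      rw [hselB a'] at hy1
      rw [hginj hy1]
    have hA' : ∀ a, Nat.card {x : {x : F // ¬ P x} // fA x.1 = a} = k := by
      intro a
      have hsplit := ncard_split (fun x : F => fA x = a) P
      have hcongr : Nat.card {x : {x : F // ¬ P x} // fA x.1 = a}
          = Nat.card {x : F // fA x = a ∧ ¬ P x} := by
        refine Nat.card_congr ⟨fun x => ⟨x.1.1, x.2, x.1.2⟩, fun x => ⟨⟨x.1, x.2.2⟩, x.2.1⟩,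
          fun x => rfl, fun x => rfl⟩
      rw [hcongr]
      have := hA a
      have := huniqA a
      omega
    have hB' : ∀ b, Nat.card {x : {x : F // ¬ P x} // fB x.1 = b} = k := by
      intro b
      have hsplit := ncard_split (fun x : F => fB x = b) P
      have hcongr : Nat.card {x : {x : F // ¬ P x} // fB x.1 = b}
          = Nat.card {x : F // fB x = b ∧ ¬ P x} := by
        refine Nat.card_congr ⟨fun x => ⟨x.1.1, x.2, x.1.2⟩, fun x => ⟨⟨x.1, x.2.2⟩, x.2.1⟩,
          fun x => rfl, fun x => rfl⟩
      rw [hcongr]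
      have := hB b
      have := huniqB b
      omega
    obtain ⟨col', hcol'A, hcol'B⟩ := ih A B {x : F // ¬ P x}
      (fun x => fA x.1) (fun x => fB x.1) hA' hB'
    refine ⟨fun x => if h : P x then Fin.last k else (col' ⟨x, h⟩).castSucc, ?_, ?_⟩
    · intro a i
      refine Fin.lastCases ?_ (fun j => ?_) i
      · refine (ncard_congr_iff (fun x => ?_)).trans (huniqA a)
        constructor
        · rintro ⟨h1, h2⟩
          refine ⟨h1, ?_⟩
          by_contra hc
          have hq : (if h : P x then Fin.last k else (col' ⟨x, h⟩).castSucc) = Fin.last k := h2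
          rw [dif_neg hc] at hq
          exact (Fin.castSucc_lt_last _).ne hq
        · rintro ⟨h1, h2⟩
          refine ⟨h1, ?_⟩
          show (if h : P x then Fin.last k else (col' ⟨x, h⟩).castSucc) = Fin.last k
          rw [dif_pos h2]
      · have hcongr : Nat.card {x : F // fA x = a ∧
            (if h : P x then Fin.last k else (col' ⟨x, h⟩).castSucc) = j.castSucc}
            = Nat.card {x : {x : F // ¬ P x} // fA x.1 = a ∧ col' x = j} := by
          refine Nat.card_congr ⟨?_, ?_, ?_, ?_⟩
          · rintro ⟨x, h1, h2⟩
            have hq : (if h : P x then Fin.last k else (col' ⟨x, h⟩).castSucc) = j.castSucc := h2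
            have hnp : ¬ P x := by
              by_contra hc
              rw [dif_pos hc] at hq
              exact (Fin.castSucc_lt_last j).ne' hq
            refine ⟨⟨x, hnp⟩, h1, ?_⟩
            rw [dif_neg hnp] at hq
            exact Fin.castSucc_injective _ hq
          · rintro ⟨⟨x, hnp⟩, h1, h2⟩
            refine ⟨x, h1, ?_⟩
            show (if h : P x then Fin.last k else (col' ⟨x, h⟩).castSucc) = j.castSucc
            rw [dif_neg hnp, h2]
          · rintro ⟨x, h1, h2⟩; rfl
          · rintro ⟨⟨x, hnp⟩, h1, h2⟩; rfl
        exact hcongr.trans (hcol'A a j)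
    · intro b i
      refine Fin.lastCases ?_ (fun j => ?_) i
      · refine (ncard_congr_iff (fun x => ?_)).trans (huniqB b)
        constructor
        · rintro ⟨h1, h2⟩
          refine ⟨h1, ?_⟩
          by_contra hc
          have hq : (if h : P x then Fin.last k else (col' ⟨x, h⟩).castSucc) = Fin.last k := h2
          rw [dif_neg hc] at hq
          exact (Fin.castSucc_lt_last _).ne hq
        · rintro ⟨h1, h2⟩
          refine ⟨h1, ?_⟩
          show (if h : P x then Fin.last k else (col' ⟨x, h⟩).castSucc) = Fin.last k
          rw [dif_pos h2]
      · have hcongr : Nat.card {x : F // fB x = b ∧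
            (if h : P x then Fin.last k else (col' ⟨x, h⟩).castSucc) = j.castSucc}
            = Nat.card {x : {x : F // ¬ P x} // fB x.1 = b ∧ col' x = j} := by
          refine Nat.card_congr ⟨?_, ?_, ?_, ?_⟩
          · rintro ⟨x, h1, h2⟩
            have hq : (if h : P x then Fin.last k else (col' ⟨x, h⟩).castSucc) = j.castSucc := h2
            have hnp : ¬ P x := by
              by_contra hc
              rw [dif_pos hc] at hq
              exact (Fin.castSucc_lt_last j).ne' hq
            refine ⟨⟨x, hnp⟩, h1, ?_⟩
            rw [dif_neg hnp] at hq
            exact Fin.castSucc_injective _ hq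
          · rintro ⟨⟨x, hnp⟩, h1, h2⟩
            refine ⟨x, h1, ?_⟩
            show (if h : P x then Fin.last k else (col' ⟨x, h⟩).castSucc) = j.castSucc
            rw [dif_neg hnp, h2]
          · rintro ⟨x, h1, h2⟩; rfl
          · rintro ⟨⟨x, hnp⟩, h1, h2⟩; rfl
        exact hcongr.trans (hcol'B b j)

end COL

namespace CONS

open DEF

attribute [local instance] Classical.propDecidable

noncomputable section

variable {E : Type*} {Y : Type*} [Fintype E] [Fintype Y]

/-- degree of `y` -/
def deg (f : E → Y) (y : Y) : ℕ := Nat.card {e // f e = y}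

/-- `⌈deg/k⌉`, the number of copies of `y` -/
def gq (k : ℕ) (f : E → Y) (y : Y) : ℕ := (deg f y + k - 1) / k

/-- deficiency of `y` -/
def ph (k : ℕ) (f : E → Y) (y : Y) : ℕ := k * gq k f y - deg f y

/-- total deficiency -/
def Dd (k : ℕ) (f : E → Y) : ℕ := ∑ y, ph k f y

lemma gq_facts {k : ℕ} (hk : 0 < k) (f : E → Y) (y : Y) :
    deg f y ≤ k * gq k f y ∧ k * gq k f y < deg f y + k := by
  set d := deg f y with hd
  have h := Nat.div_add_mod (d + k - 1) k
  have hm : (d + k - 1) % k < k := Nat.mod_lt _ hk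
  have hgq : gq k f y = (d + k - 1) / k := rfl
  rw [hgq]
  obtain ⟨P, hP⟩ : ∃ P, P = k * ((d + k - 1) / k) := ⟨_, rfl⟩
  rw [← hP] at h ⊢
  omega

lemma ph_eq {k : ℕ} (hk : 0 < k) (f : E → Y) (y : Y) :
    ph k f y + deg f y = k * gq k f y :=
  Nat.sub_add_cancel (gq_facts hk f y).1

lemma ph_lt {k : ℕ} (hk : 0 < k) (f : E → Y) (y : Y) : ph k f y < k := by
  have h1 := (gq_facts hk f y).2
  have h2 := ph_eq hk f y
  omega

lemma gq_pos_of_ph {k : ℕ} (hk : 0 < k) {f : E → Y} {y : Y} (h : 0 < ph k f y) :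
    0 < gq k f y := by
  by_contra h0
  push_neg at h0
  interval_cases hgq : gq k f y
  · unfold ph at h
    rw [hgq] at h
    simp at h

lemma deg_le (f : E → Y) (y : Y) : deg f y ≤ Nat.card E := by
  rw [deg, ncard_filter, Nat.card_eq_fintype_card, ← Finset.card_univ]
  exact Finset.card_filter_le _ _

lemma gq_le {k : ℕ} (hk : 0 < k) (f : E → Y) (y : Y) : gq k f y ≤ Nat.card E := by
  refine le_trans ?_ (deg_le f y)
  set d := deg f y with hd
  show (d + k - 1) / k ≤ d
  rcases Nat.eq_zero_or_pos d with h | h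
  · rw [h]
    have : (0 + k - 1) / k = 0 := Nat.div_eq_of_lt (by omega)
    omega
  · rw [Nat.div_le_iff_le_mul_add_pred hk]
    have h2 : d ≤ k * d := Nat.le_mul_of_pos_left d hk
    obtain ⟨P, hP⟩ : ∃ P, P = k * d := ⟨_, rfl⟩
    rw [← hP] at h2 ⊢
    omega

/-- enumeration of edges at a vertex -/
def outE (f : E → Y) (y : Y) : {e // f e = y} ≃ Fin (deg f y) :=
  Fintype.equivFinOfCardEq (by rw [← Nat.card_eq_fintype_card]; rfl)

/-- rank of an edge among the edges with the same endpoint -/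
def rk (f : E → Y) (e : E) : ℕ := (outE f (f e) ⟨e, rfl⟩).val

lemma rk_lt (f : E → Y) (e : E) : rk f e < deg f (f e) := (outE f (f e) ⟨e, rfl⟩).isLt

lemma rk_eq (f : E → Y) {e : E} {y : Y} (h : f e = y) :
    ((outE f y ⟨e, h⟩ : Fin (deg f y)) : ℕ) = rk f e := by subst h; rfl

/-- enumeration of deficiency slots -/
def sE (k : ℕ) (f : E → Y) : Fin (Dd k f) ≃ (Σ y : Y, Fin (ph k f y)) :=
  (Fintype.equivFinOfCardEq (by simp [Dd])).symm

/-- copies: vertex `y` together with a copy index `< gq k f y` -/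
abbrev Cop (k : ℕ) (f : E → Y) : Type _ := {p : Y × Fin (Nat.card E + 1) // p.2.val < gq k f p.1}

/-- one side of the padded bipartite graph -/
def sideMap (k : ℕ) (hk : 0 < k) (f : E → Y) (Do ρ : ℕ) :
    (E ⊕ (Fin Do ⊕ (Fin (Dd k f) ⊕ Fin (k - ρ)))) → (Cop k f ⊕ Fin (Do / k + 1))
  | .inl e => .inl ⟨(f e, ⟨rk f e / k,
      lt_of_lt_of_le ((Nat.div_lt_iff_lt_mul hk).mpr
        (lt_of_lt_of_le (rk_lt f e) (by rw [mul_comm]; exact (gq_facts hk f (f e)).1)))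
        (le_trans (gq_le hk f (f e)) (Nat.le_succ _))⟩),
      (Nat.div_lt_iff_lt_mul hk).mpr
        (lt_of_lt_of_le (rk_lt f e) (by rw [mul_comm]; exact (gq_facts hk f (f e)).1))⟩
  | .inr (.inl j) => .inr ⟨j.val / k,
      Nat.lt_succ_of_le (Nat.div_le_div_right (le_of_lt j.isLt))⟩
  | .inr (.inr (.inl j)) => .inl ⟨((sE k f j).1, ⟨gq k f (sE k f j).1 - 1,
      Nat.lt_succ_of_le (le_trans (Nat.sub_le _ _) (gq_le hk f _))⟩),
      Nat.sub_lt (gq_pos_of_ph hk ((sE k f j).2.pos)) Nat.one_pos⟩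
  | .inr (.inr (.inr _)) => .inr ⟨Do / k, Nat.lt_succ_self _⟩

lemma arith1 (d G CV ph k : ℕ) (h1 : CV + k = G) (h2 : ph + d = G) (h3 : d ≤ G)
    (h4 : G < d + k) : min d (CV + k) - min d CV + ph = k := by omega

lemma arith2 (d CV k : ℕ) (h : CV + k ≤ d) : min d (CV + k) - min d CV + 0 = k := by omega

lemma arith3 (Do P ρ k : ℕ) (h1 : P + ρ = Do) (h2 : ρ < k) :
    min Do (P + k) - min Do P + (k - ρ) = k := by omega

lemma count_real {k : ℕ} (hk : 0 < k) (f : E → Y) (y : Y) (c : ℕ) :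
    Nat.card {e : E // f e = y ∧ rk f e / k = c}
      = min (deg f y) (c * k + k) - min (deg f y) (c * k) := by
  rw [← card_div_fiber (d := deg f y) (c := c) hk]
  refine Nat.card_congr ⟨fun x => ⟨outE f y ⟨x.1, x.2.1⟩, by rw [rk_eq f x.2.1]; exact x.2.2⟩,
    fun j => ⟨((outE f y).symm j.1).1, ((outE f y).symm j.1).2, ?_⟩, fun x => ?_, fun j => ?_⟩
  · have h2 : ((outE f y) ((outE f y).symm j.1)).val = rk f ((outE f y).symm j.1).1 :=
      rk_eq f ((outE f y).symm j.1).2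
    rw [Equiv.apply_symm_apply] at h2
    rw [← h2]
    exact j.2
  · apply Subtype.ext
    show ((outE f y).symm ((outE f y) ⟨x.1, x.2.1⟩)).1 = x.1
    rw [Equiv.symm_apply_apply]
  · apply Subtype.ext
    show ((outE f y) ⟨((outE f y).symm j.1).1, ((outE f y).symm j.1).2⟩) = j.1
    exact (outE f y).apply_symm_apply j.1

lemma count_slots (k : ℕ) (f : E → Y) (y : Y) :
    Nat.card {j : Fin (Dd k f) // (sE k f j).1 = y} = ph k f y := by
  rw [Nat.card_congr (Equiv.subtypeEquiv (sE k f)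
    (p := fun j => (sE k f j).1 = y) (q := fun s => s.1 = y) (fun j => Iff.rfl))]
  refine (Nat.card_congr ⟨?_, ?_, ?_, ?_⟩).trans
    (by simp : Nat.card (Fin (ph k f y)) = ph k f y)
  · rintro ⟨⟨y', b⟩, h⟩
    exact ⟨b.val, by rw [← h]; exact b.isLt⟩
  · intro b
    exact ⟨⟨y, b⟩, rfl⟩
  · rintro ⟨⟨y', b⟩, h⟩
    subst h
    rfl
  · intro b
    rfl

theorem side_fiber {k : ℕ} (hk : 0 < k) (f : E → Y) (Do ρ : ℕ) (hρ : Do % k = ρ)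
    (α : Cop k f ⊕ Fin (Do / k + 1)) :
    Nat.card {x // sideMap k hk f Do ρ x = α} = k := by
  have hrho : ρ < k := hρ ▸ Nat.mod_lt _ hk
  rcases α with ⟨⟨y, cv⟩, hc⟩ | h
  · -- fiber over a vertex copy
    rw [ncard_sum, ncard_sum, ncard_sum]
    have h2 : Nat.card {j : Fin Do //
        sideMap k hk f Do ρ (Sum.inr (Sum.inl j)) = Sum.inl ⟨(y, cv), hc⟩} = 0 :=
      ncard_empty (fun j => by simp [sideMap])
    have h4 : Nat.card {j : Fin (k - ρ) //
        sideMap k hk f Do ρ (Sum.inr (Sum.inr (Sum.inr j))) = Sum.inl ⟨(y, cv), hc⟩} = 0 :=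
      ncard_empty (fun j => by simp [sideMap])
    have h1 : Nat.card {e : E //
        sideMap k hk f Do ρ (Sum.inl e) = Sum.inl ⟨(y, cv), hc⟩}
        = min (deg f y) (cv.val * k + k) - min (deg f y) (cv.val * k) := by
      rw [ncard_congr_iff (q := fun e => f e = y ∧ rk f e / k = cv.val)
        (fun e => by simp [sideMap, Subtype.ext_iff, Prod.ext_iff, Fin.ext_iff])]
      exact count_real hk f y cv.val
    have hGfacts := gq_facts hk f y
    have hpheq := ph_eq hk f y
    by_cases hcase : gq k f y - 1 = cv.val
    · have h3 : Nat.card {j : Fin (Dd k f) //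
          sideMap k hk f Do ρ (Sum.inr (Sum.inr (Sum.inl j))) = Sum.inl ⟨(y, cv), hc⟩}
          = ph k f y := by
        rw [ncard_congr_iff (q := fun j : Fin (Dd k f) => (sE k f j).1 = y)
          (fun j => by
            simp only [sideMap, Sum.inl.injEq, Subtype.mk.injEq, Prod.mk.injEq, Fin.ext_iff]
            constructor
            · rintro ⟨ha, _⟩; exact ha
            · intro ha
              refine ⟨ha, ?_⟩
              rw [ha]
              exact hcase)]
        exact count_slots k f y
      rw [h1, h2, h3, h4]
      have hcc : cv.val < gq k f y := hc
      have hg1 : 1 ≤ gq k f y := lt_of_le_of_lt (Nat.zero_le _) hcc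
      have hPk : cv.val * k + k = k * gq k f y := by
        rw [← hcase]
        obtain ⟨t, ht⟩ := Nat.exists_eq_add_of_le hg1
        rw [ht]
        simp
        ring
      refine Eq.trans (by ring_nf) (arith1 (deg f y) (k * gq k f y) (cv.val * k) (ph k f y) k
        hPk hpheq hGfacts.1 hGfacts.2)
    · have h3 : Nat.card {j : Fin (Dd k f) //
          sideMap k hk f Do ρ (Sum.inr (Sum.inr (Sum.inl j))) = Sum.inl ⟨(y, cv), hc⟩}
          = 0 := by
        refine ncard_empty (fun j hj => ?_)
        have h' : (sE k f j).1 = y ∧ (gq k f (sE k f j).1 - 1 : ℕ) = cv.val := by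
          simpa only [sideMap, Sum.inl.injEq, Subtype.mk.injEq, Prod.mk.injEq, Fin.ext_iff]
            using hj
        obtain ⟨ha, hb⟩ := h'
        rw [ha] at hb
        exact hcase hb
      rw [h1, h2, h3, h4]
      have hcc : cv.val < gq k f y := hc
      have hcv1 : cv.val + 1 ≤ gq k f y - 1 := by omega
      have hkey : cv.val * k + k ≤ deg f y := by
        have e1 : (cv.val + 1) * k ≤ (gq k f y - 1) * k := Nat.mul_le_mul_right _ hcv1
        have e2 : (cv.val + 1) * k = cv.val * k + k := by ring
        have e3 : (gq k f y - 1) * k = gq k f y * k - k := by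
          rw [tsub_mul, one_mul]
        have e4 : gq k f y * k = k * gq k f y := mul_comm _ _
        omega
      refine Eq.trans (by ring_nf) (arith2 (deg f y) (cv.val * k) k hkey)
  · -- fiber over a hub
    rw [ncard_sum, ncard_sum, ncard_sum]
    have h1 : Nat.card {e : E //
        sideMap k hk f Do ρ (Sum.inl e) = Sum.inr h} = 0 :=
      ncard_empty (fun e => by simp [sideMap])
    have h3 : Nat.card {j : Fin (Dd k f) //
        sideMap k hk f Do ρ (Sum.inr (Sum.inr (Sum.inl j))) = Sum.inr h} = 0 :=
      ncard_empty (fun j => by simp [sideMap])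
    have h2 : Nat.card {j : Fin Do //
        sideMap k hk f Do ρ (Sum.inr (Sum.inl j)) = Sum.inr h}
        = min Do (h.val * k + k) - min Do (h.val * k) := by
      rw [ncard_congr_iff (q := fun j : Fin Do => j.val / k = h.val)
        (fun j => by simp [sideMap, Fin.ext_iff])]
      exact card_div_fiber hk
    have hdm := Nat.div_add_mod Do k
    rw [hρ] at hdm
    by_cases hcase : h.val = Do / k
    · have h4 : Nat.card {j : Fin (k - ρ) //
          sideMap k hk f Do ρ (Sum.inr (Sum.inr (Sum.inr j))) = Sum.inr h}
          = k - ρ := by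
        refine (ncard_true (fun j => ?_)).trans (by simp)
        simp [sideMap, Fin.ext_iff, hcase]
      rw [h1, h2, h3, h4]
      have hPk : h.val * k = k * (Do / k) := by rw [hcase]; ring
      have := arith3 Do (k * (Do / k)) ρ k hdm hrho
      rw [← hPk] at this
      omega
    · have h4 : Nat.card {j : Fin (k - ρ) //
          sideMap k hk f Do ρ (Sum.inr (Sum.inr (Sum.inr j))) = Sum.inr h}
          = 0 := by
        refine ncard_empty (fun j hj => ?_)
        have : (Do / k : ℕ) = h.val := by
          simpa [sideMap, Fin.ext_iff] using hj
        exact hcase this.symm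
      rw [h1, h2, h3, h4]
      have hlt : h.val < Do / k := by
        have := h.isLt
        omega
      have hkey : h.val * k + k ≤ Do := by
        have e1 : (h.val + 1) * k ≤ (Do / k) * k := Nat.mul_le_mul_right _ hlt
        have e2 : (h.val + 1) * k = h.val * k + k := by ring
        have e3 : (Do / k) * k = k * (Do / k) := mul_comm _ _
        omega
      refine Eq.trans (by ring_nf) (arith2 Do (h.val * k) k hkey)

lemma card_fin_lt {K g : ℕ} (h : g ≤ K) : Nat.card {v : Fin K // v.val < g} = g := by
  refine (Nat.card_congr ((⟨fun v => ⟨v.1.val, v.2⟩,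
    fun w => ⟨⟨w.val, lt_of_lt_of_le w.isLt h⟩, w.isLt⟩,
    fun v => by apply Subtype.ext; apply Fin.ext; rfl,
    fun w => by apply Fin.ext; rfl⟩ : {v : Fin K // v.val < g} ≃ Fin g))).trans (by simp)

/-- the vertex of a copy, if any -/
def vOf {k : ℕ} {f : E → Y} {n : ℕ} : (Cop k f ⊕ Fin n) → Option Y :=
  Sum.elim (fun c => some c.1.1) (fun _ => none)

lemma count_copies {k : ℕ} (hk : 0 < k) (f : E → Y) (n : ℕ) (y : Y) :
    Nat.card {α : Cop k f ⊕ Fin n // vOf α = some y} = gq k f y := by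
  rw [ncard_sum]
  have h2 : Nat.card {b : Fin n // vOf (Sum.inr b : Cop k f ⊕ Fin n) = some y} = 0 :=
    ncard_empty (fun b => by simp [vOf])
  have h1 : Nat.card {c : Cop k f // vOf (Sum.inl c : Cop k f ⊕ Fin n) = some y}
      = gq k f y := by
    have e1 : {c : Cop k f // vOf (Sum.inl c : Cop k f ⊕ Fin n) = some y}
        ≃ {v : Fin (Nat.card E + 1) // v.val < gq k f y} := by
      refine ⟨fun c => ⟨c.1.1.2, ?_⟩, fun v => ⟨⟨(y, v.1), v.2⟩, rfl⟩, ?_, ?_⟩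
      · have h' : c.1.1.1 = y := by
          have := c.2
          simpa [vOf] using this
        exact lt_of_lt_of_le c.1.2 (le_of_eq (congrArg (gq k f) h'))
      · rintro ⟨⟨⟨y', v⟩, hv⟩, hc⟩
        have h' : y' = y := by simpa [vOf] using hc
        subst h'
        rfl
      · rintro ⟨v, hv⟩
        rfl
    rw [Nat.card_congr e1]
    exact card_fin_lt (le_trans (gq_le hk f y) (Nat.le_succ _))
  rw [h1, h2]
  omega

lemma arith5 {k out fk gq d ph : ℕ} (hk : 0 < k) (h1 : out + fk = gq) (h2 : fk ≤ 1)
    (h3 : ph = 0 → fk = 0) (h4 : ph + d = k * gq) (h5 : k * gq < d + k)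
    (hko : k * out + k * fk = k * gq) :
    k * out < d + k ∧ d < k * out + k := by
  rcases Nat.le_one_iff_eq_zero_or_eq_one.mp h2 with h | h
  · subst h
    rw [Nat.mul_zero, Nat.add_zero] at hko
    omega
  · subst h
    have hph : ph ≠ 0 := fun hp => by simpa using h3 hp
    rw [Nat.mul_one] at hko
    omega

theorem side_bound {k : ℕ} (hk : 0 < k) (f : E → Y) (Do ρ : ℕ)
    (col : (E ⊕ (Fin Do ⊕ (Fin (Dd k f) ⊕ Fin (k - ρ)))) → Fin k)
    (hcol : ∀ α i, Nat.card {x // sideMap k hk f Do ρ x = α ∧ col x = i} = 1)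
    (y : Y) (i : Fin k) :
    k * Nat.card {e : E // f e = y ∧ col (Sum.inl e) = i} < deg f y + k ∧
    deg f y < k * Nat.card {e : E // f e = y ∧ col (Sum.inl e) = i} + k := by
  set sm := sideMap k hk f Do ρ with hsm
  set out := Nat.card {e : E // f e = y ∧ col (Sum.inl e) = i} with hout
  set fk := Nat.card {j : Fin (Dd k f) //
    (sE k f j).1 = y ∧ col (Sum.inr (Sum.inr (Sum.inl j))) = i} with hfk
  -- Step A : out + fk = gq k f y
  have stepA : out + fk = gq k f y := by
    have hfw := ncard_fiberwise (f := sm) (q := fun x => vOf (sm x) = some y ∧ col x = i)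
    have hterm : ∀ α, Nat.card {x // sm x = α ∧ (vOf (sm x) = some y ∧ col x = i)}
        = if vOf α = some y then 1 else 0 := by
      intro α
      by_cases hα : vOf α = some y
      · rw [if_pos hα]
        rw [ncard_congr_iff (q := fun x => sm x = α ∧ col x = i) (fun x => ?_)]
        · exact hcol α i
        · constructor
          · rintro ⟨ha, _, hb⟩; exact ⟨ha, hb⟩
          · rintro ⟨ha, hb⟩; exact ⟨ha, by rw [ha]; exact hα, hb⟩
      · rw [if_neg hα]
        refine ncard_empty (fun x hx => ?_)
        exact hα (hx.1 ▸ hx.2.1)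
    rw [Finset.sum_congr rfl (fun α _ => hterm α), Finset.sum_boole, filter_card_eq_ncard,
      count_copies hk f (Do / k + 1) y, Nat.cast_id] at hfw
    -- decompose LHS by constructors
    rw [ncard_sum, ncard_sum, ncard_sum] at hfw
    have c1 : Nat.card {e : E // vOf (sm (Sum.inl e)) = some y ∧ col (Sum.inl e) = i}
        = out := by
      rw [hout]
      refine ncard_congr_iff (fun e => ?_)
      simp [hsm, sideMap, vOf]
    have c2 : Nat.card {j : Fin Do //
        vOf (sm (Sum.inr (Sum.inl j))) = some y ∧ col (Sum.inr (Sum.inl j)) = i} = 0 :=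
      ncard_empty (fun j hj => by simpa [hsm, sideMap, vOf] using hj.1)
    have c3 : Nat.card {j : Fin (Dd k f) //
        vOf (sm (Sum.inr (Sum.inr (Sum.inl j)))) = some y
          ∧ col (Sum.inr (Sum.inr (Sum.inl j))) = i} = fk := by
      rw [hfk]
      refine ncard_congr_iff (fun j => ?_)
      simp [hsm, sideMap, vOf]
    have c4 : Nat.card {j : Fin (k - ρ) //
        vOf (sm (Sum.inr (Sum.inr (Sum.inr j)))) = some y
          ∧ col (Sum.inr (Sum.inr (Sum.inr j))) = i} = 0 :=
      ncard_empty (fun j hj => by simpa [hsm, sideMap, vOf] using hj.1)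
    rw [c1, c2, c3, c4] at hfw
    omega
  -- gq = 0 case
  rcases Nat.eq_zero_or_pos (gq k f y) with hg0 | hgpos
  · have hd0 : deg f y = 0 := by
      have := (gq_facts hk f y).1
      rw [hg0] at this
      simpa using this
    have hout0 : out = 0 := by omega
    rw [hout0, hd0]
    simpa using hk
  -- Step B : fk ≤ 1
  have stepB : fk ≤ 1 := by
    rw [← hcol (Sum.inl ⟨(y, ⟨gq k f y - 1,
      Nat.lt_succ_of_le (le_trans (Nat.sub_le _ _) (gq_le hk f y))⟩),
      Nat.sub_lt hgpos Nat.one_pos⟩) i]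
    refine ncard_mono_inj (fun j => Sum.inr (Sum.inr (Sum.inl j)))
      (fun a b hab => by simpa using hab) (fun j hj => ?_)
    refine ⟨?_, hj.2⟩
    simp only [hsm, sideMap, Sum.inl.injEq, Subtype.mk.injEq, Prod.mk.injEq, Fin.ext_iff]
    exact ⟨hj.1, by rw [hj.1]⟩
  -- Step C : ph = 0 → fk = 0
  have stepC : ph k f y = 0 → fk = 0 := by
    intro hp
    refine ncard_empty (fun j hj => ?_)
    have := (sE k f j).2.pos
    rw [hj.1] at this
    omega
  have hko : k * out + k * fk = k * gq k f y := by
    have := congrArg (k * ·) stepA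
    simpa [mul_add] using this
  exact arith5 hk stepA stepB stepC (ph_eq hk f y) (gq_facts hk f y).2 hko

lemma sum_deg (f : E → Y) : ∑ y, deg f y = Nat.card E := by
  rw [Nat.card_eq_fintype_card, ← Finset.card_univ,
    Finset.card_eq_sum_card_fiberwise (f := f) (t := univ) (fun x _ => mem_univ _)]
  exact Finset.sum_congr rfl (fun y _ => filter_card_eq_ncard.symm)

lemma Dd_add_card {k : ℕ} (hk : 0 < k) (f : E → Y) :
    Dd k f + Nat.card E = k * ∑ y, gq k f y := by
  rw [← sum_deg f, Dd, ← Finset.sum_add_distrib, Finset.mul_sum]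
  exact Finset.sum_congr rfl (fun y _ => ph_eq hk f y)

lemma Dd_mod_eq {E' U W : Type*} [Fintype E'] [Fintype U] [Fintype W] {k : ℕ} (hk : 0 < k)
    (fT : E' → U) (fH : E' → W) : Dd k fT % k = Dd k fH % k := by
  have g1 : (Dd k fT + Nat.card E') % k = 0 := by
    rw [Dd_add_card hk fT]; exact Nat.mul_mod_right _ _
  have g2 : (Dd k fH + Nat.card E') % k = 0 := by
    rw [Dd_add_card hk fH]; exact Nat.mul_mod_right _ _
  have e1 : Dd k fT + Nat.card E' ≡ Dd k fH + Nat.card E' [MOD k] := by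
    show _ % k = _ % k
    rw [g1, g2]
  exact Nat.ModEq.add_right_cancel' _ e1

theorem aux {E' U W : Type*} [Fintype E'] [Fintype U] [Fintype W]
    (fT : E' → U) (fH : E' → W) {k : ℕ} (hk : 0 < k) :
    ∃ c : E' → Fin k,
      (∀ u i, k * Nat.card {e // fT e = u ∧ c e = i} < deg fT u + k ∧
        deg fT u < k * Nat.card {e // fT e = u ∧ c e = i} + k) ∧
      (∀ w i, k * Nat.card {e // fH e = w ∧ c e = i} < deg fH w + k ∧
        deg fH w < k * Nat.card {e // fH e = w ∧ c e = i} + k) ∧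
      (∀ i : Fin k, k * Nat.card {e // c e = i} < Nat.card E' + k ∧
        Nat.card E' < k * Nat.card {e // c e = i} + k) := by
  classical
  set ρ := Dd k fH % k with hρ
  have hρT : Dd k fT % k = ρ := Dd_mod_eq hk fT fH
  set sm1 := sideMap k hk fT (Dd k fH) ρ with hsm1
  set sm2 := sideMap k hk fH (Dd k fT) ρ with hsm2
  set σ := (swapMid : (E' ⊕ (Fin (Dd k fH) ⊕ (Fin (Dd k fT) ⊕ Fin (k - ρ))))
    ≃ (E' ⊕ (Fin (Dd k fT) ⊕ (Fin (Dd k fH) ⊕ Fin (k - ρ))))) with hσ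
  have hA : ∀ α, Nat.card {x // sm1 x = α} = k := fun α => side_fiber hk fT _ ρ hρ.symm α
  have hB : ∀ β, Nat.card {x // sm2 (σ x) = β} = k := by
    intro β
    rw [Nat.card_congr (Equiv.subtypeEquiv σ (p := fun x => sm2 (σ x) = β)
      (q := fun z => sm2 z = β) (fun x => Iff.rfl))]
    exact side_fiber hk fH _ ρ hρT β
  obtain ⟨col, hcolA, hcolB⟩ := COL.exists_proper k _ _ _ sm1 (fun x => sm2 (σ x)) hA hB
  refine ⟨fun e => col (Sum.inl e), ?_, ?_, ?_⟩
  · intro u i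
    exact side_bound hk fT (Dd k fH) ρ col hcolA u i
  · intro w i
    have hcolB' : ∀ β i, Nat.card {z // sm2 z = β ∧ col (σ.symm z) = i} = 1 := by
      intro β i
      refine (Nat.card_congr (Equiv.subtypeEquiv σ.symm (fun z => ?_))).trans (hcolB β i)
      rw [Equiv.apply_symm_apply]
    exact side_bound hk fH (Dd k fT) ρ (fun z => col (σ.symm z)) hcolB' w i
  · intro i
    set s := Nat.card {e : E' // col (Sum.inl e) = i} with hs
    set rsH := Nat.card {j : Fin (Dd k fH) // col (Sum.inr (Sum.inl j)) = i} with hrsH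
    set rsT := Nat.card {j : Fin (Dd k fT) // col (Sum.inr (Sum.inr (Sum.inl j))) = i} with hrsT
    set br := Nat.card {j : Fin (k - ρ) // col (Sum.inr (Sum.inr (Sum.inr j))) = i} with hbr
    set A := Fintype.card (Cop k fT ⊕ Fin (Dd k fH / k + 1)) with hA2
    -- total count of color i
    have h1 : s + (rsH + (rsT + br)) = A := by
      have e1 := ncard_fiberwise (f := sm1) (q := fun x => col x = i)
      rw [Finset.sum_congr rfl (fun α _ => hcolA α i), Finset.sum_const, smul_eq_mul,
        mul_one, Finset.card_univ] at e1
      rw [ncard_sum, ncard_sum, ncard_sum] at e1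
      rw [hs, hrsH, hrsT, hbr, hA2]
      exact e1
    -- hub counts, T side
    have h2 : rsH + br = Dd k fH / k + 1 := by
      have e1 := ncard_fiberwise (f := sm1) (q := fun x => (sm1 x).isRight = true ∧ col x = i)
      have hterm : ∀ α, Nat.card {x // sm1 x = α ∧ ((sm1 x).isRight = true ∧ col x = i)}
          = if α.isRight = true then 1 else 0 := by
        intro α
        by_cases hα : α.isRight = true
        · rw [if_pos hα]
          rw [ncard_congr_iff (q := fun x => sm1 x = α ∧ col x = i) (fun x => ?_)]
          · exact hcolA α i
          · constructor
            · rintro ⟨ha, _, hb⟩; exact ⟨ha, hb⟩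
            · rintro ⟨ha, hb⟩; exact ⟨ha, by rw [ha]; exact hα, hb⟩
        · rw [if_neg hα]
          refine ncard_empty (fun x hx => ?_)
          exact hα (hx.1 ▸ hx.2.1)
      rw [Finset.sum_congr rfl (fun α _ => hterm α), Finset.sum_boole, filter_card_eq_ncard,
        Nat.cast_id] at e1
      have hright : Nat.card {α : Cop k fT ⊕ Fin (Dd k fH / k + 1) // α.isRight = true}
          = Dd k fH / k + 1 := by
        rw [ncard_sum]
        have z1 : Nat.card {c : Cop k fT // Sum.isRight (Sum.inl c : Cop k fT ⊕
            Fin (Dd k fH / k + 1)) = true} = 0 := ncard_empty (fun c hc => by simp at hc)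
        have z2 : Nat.card {h : Fin (Dd k fH / k + 1) // Sum.isRight (Sum.inr h : Cop k fT ⊕
            Fin (Dd k fH / k + 1)) = true} = Dd k fH / k + 1 :=
          (ncard_true (fun h => rfl)).trans (by simp)
        rw [z1, z2]
        omega
      rw [hright] at e1
      rw [ncard_sum, ncard_sum, ncard_sum] at e1
      have c1 : Nat.card {e : E' // (sm1 (Sum.inl e)).isRight = true ∧ col (Sum.inl e) = i}
          = 0 := ncard_empty (fun e he => by simp [hsm1, sideMap] at he)
      have c2 : Nat.card {j : Fin (Dd k fH) //
          (sm1 (Sum.inr (Sum.inl j))).isRight = true ∧ col (Sum.inr (Sum.inl j)) = i}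
          = rsH := by
        rw [hrsH]
        refine ncard_congr_iff (fun j => ?_)
        simp [hsm1, sideMap]
      have c3 : Nat.card {j : Fin (Dd k fT) //
          (sm1 (Sum.inr (Sum.inr (Sum.inl j)))).isRight = true
            ∧ col (Sum.inr (Sum.inr (Sum.inl j))) = i} = 0 :=
        ncard_empty (fun j hj => by simp [hsm1, sideMap] at hj)
      have c4 : Nat.card {j : Fin (k - ρ) //
          (sm1 (Sum.inr (Sum.inr (Sum.inr j)))).isRight = true
            ∧ col (Sum.inr (Sum.inr (Sum.inr j))) = i} = br := by
        rw [hbr]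
        refine ncard_congr_iff (fun j => ?_)
        simp [hsm1, sideMap]
      rw [c1, c2, c3, c4] at e1
      omega
    -- hub counts, H side
    have h3 : rsT + br = Dd k fT / k + 1 := by
      have e1 := ncard_fiberwise (f := fun x => sm2 (σ x))
        (q := fun x => (sm2 (σ x)).isRight = true ∧ col x = i)
      have hterm : ∀ α, Nat.card {x // sm2 (σ x) = α ∧ ((sm2 (σ x)).isRight = true ∧ col x = i)}
          = if α.isRight = true then 1 else 0 := by
        intro α
        by_cases hα : α.isRight = true
        · rw [if_pos hα]
          rw [ncard_congr_iff (q := fun x => sm2 (σ x) = α ∧ col x = i) (fun x => ?_)]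
          · exact hcolB α i
          · constructor
            · rintro ⟨ha, _, hb⟩; exact ⟨ha, hb⟩
            · rintro ⟨ha, hb⟩; exact ⟨ha, by rw [ha]; exact hα, hb⟩
        · rw [if_neg hα]
          refine ncard_empty (fun x hx => ?_)
          exact hα (hx.1 ▸ hx.2.1)
      rw [Finset.sum_congr rfl (fun α _ => hterm α), Finset.sum_boole, filter_card_eq_ncard,
        Nat.cast_id] at e1
      have hright : Nat.card {α : Cop k fH ⊕ Fin (Dd k fT / k + 1) // α.isRight = true}
          = Dd k fT / k + 1 := by
        rw [ncard_sum]
        have z1 : Nat.card {c : Cop k fH // Sum.isRight (Sum.inl c : Cop k fH ⊕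
            Fin (Dd k fT / k + 1)) = true} = 0 := ncard_empty (fun c hc => by simp at hc)
        have z2 : Nat.card {h : Fin (Dd k fT / k + 1) // Sum.isRight (Sum.inr h : Cop k fH ⊕
            Fin (Dd k fT / k + 1)) = true} = Dd k fT / k + 1 :=
          (ncard_true (fun h => rfl)).trans (by simp)
        rw [z1, z2]
        omega
      rw [hright] at e1
      rw [ncard_sum, ncard_sum, ncard_sum] at e1
      have c1 : Nat.card {e : E' // (sm2 (σ (Sum.inl e))).isRight = true ∧ col (Sum.inl e) = i}
          = 0 := ncard_empty (fun e he => by simp [hσ, swapMid, hsm2, sideMap] at he)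
      have c2 : Nat.card {j : Fin (Dd k fH) //
          (sm2 (σ (Sum.inr (Sum.inl j)))).isRight = true ∧ col (Sum.inr (Sum.inl j)) = i}
          = 0 := ncard_empty (fun j hj => by simp [hσ, swapMid, hsm2, sideMap] at hj)
      have c3 : Nat.card {j : Fin (Dd k fT) //
          (sm2 (σ (Sum.inr (Sum.inr (Sum.inl j))))).isRight = true
            ∧ col (Sum.inr (Sum.inr (Sum.inl j))) = i} = rsT := by
        rw [hrsT]
        refine ncard_congr_iff (fun j => ?_)
        simp [hσ, swapMid, hsm2, sideMap]
      have c4 : Nat.card {j : Fin (k - ρ) //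
          (sm2 (σ (Sum.inr (Sum.inr (Sum.inr j))))).isRight = true
            ∧ col (Sum.inr (Sum.inr (Sum.inr j))) = i} = br := by
        rw [hbr]
        refine ncard_congr_iff (fun j => ?_)
        simp [hσ, swapMid, hsm2, sideMap]
      rw [c1, c2, c3, c4] at e1
      omega
    -- br ≤ 1
    have h4 : br ≤ 1 := by
      rw [← hcolA (Sum.inr ⟨Dd k fH / k, Nat.lt_succ_self _⟩) i, hbr]
      refine ncard_mono_inj (fun j => Sum.inr (Sum.inr (Sum.inr j)))
        (fun a b hab => by simpa using hab) (fun j hj => ⟨rfl, hj⟩)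
    -- ρ = 0 → br = 1
    have h5 : ρ = 0 → br = 1 := by
      intro h0
      have hone := hcolA (Sum.inr ⟨Dd k fH / k, Nat.lt_succ_self _⟩) i
      rw [ncard_sum, ncard_sum, ncard_sum] at hone
      have c1 : Nat.card {e : E' // sm1 (Sum.inl e) = Sum.inr ⟨Dd k fH / k, Nat.lt_succ_self _⟩
          ∧ col (Sum.inl e) = i} = 0 :=
        ncard_empty (fun e he => by simp [hsm1, sideMap] at he)
      have c2 : Nat.card {j : Fin (Dd k fH) //
          sm1 (Sum.inr (Sum.inl j)) = Sum.inr ⟨Dd k fH / k, Nat.lt_succ_self _⟩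
          ∧ col (Sum.inr (Sum.inl j)) = i} = 0 := by
        refine ncard_empty (fun j hj => ?_)
        have hjq : j.val / k = Dd k fH / k := by
          have := hj.1
          simpa [hsm1, sideMap, Fin.ext_iff] using this
        have hDH : Dd k fH = k * (Dd k fH / k) := by
          have := Nat.div_add_mod (Dd k fH) k
          omega
        have hle : (Dd k fH / k) * k ≤ j.val := ((nat_div_eq_iff hk).mp hjq).1
        have hlt : j.val < Dd k fH := j.isLt
        rw [mul_comm] at hle
        omega
      have c3 : Nat.card {j : Fin (Dd k fT) //
          sm1 (Sum.inr (Sum.inr (Sum.inl j))) = Sum.inr ⟨Dd k fH / k, Nat.lt_succ_self _⟩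
          ∧ col (Sum.inr (Sum.inr (Sum.inl j))) = i} = 0 :=
        ncard_empty (fun j hj => by simp [hsm1, sideMap] at hj)
      have c4 : Nat.card {j : Fin (k - ρ) //
          sm1 (Sum.inr (Sum.inr (Sum.inr j))) = Sum.inr ⟨Dd k fH / k, Nat.lt_succ_self _⟩
          ∧ col (Sum.inr (Sum.inr (Sum.inr j))) = i} = br := by
        rw [hbr]
        refine ncard_congr_iff (fun j => ?_)
        constructor
        · rintro ⟨_, hb⟩; exact hb
        · intro hb; exact ⟨rfl, hb⟩
      rw [c1, c2, c3, c4] at hone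
      omega
    -- total size of F
    have h6 : Nat.card E' + (Dd k fH + (Dd k fT + (k - ρ))) = k * A := by
      have e1 := ncard_fiberwise (f := sm1) (q := fun _ => True)
      rw [ncard_true (fun _ => trivial)] at e1
      have hterm : ∀ α, Nat.card {x // sm1 x = α ∧ True} = k := by
        intro α
        rw [ncard_congr_iff (q := fun x => sm1 x = α) (fun x => iff_of_eq (and_true _))]
        exact hA α
      rw [Finset.sum_congr rfl (fun α _ => hterm α), Finset.sum_const, smul_eq_mul,
        Finset.card_univ, mul_comm] at e1
      rw [← e1, Nat.card_sum, Nat.card_sum, Nat.card_sum]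
      simp
    -- divisions
    have h7 : Dd k fH = k * (Dd k fH / k) + ρ := by
      have := Nat.div_add_mod (Dd k fH) k
      omega
    have h8 : Dd k fT = k * (Dd k fT / k) + ρ := by
      have := Nat.div_add_mod (Dd k fT) k
      rw [hρT] at this
      omega
    have h9 : ρ < k := hρ ▸ Nat.mod_lt _ hk
    -- multiply everything by k
    have H1 : k * s + (k * rsH + (k * rsT + k * br)) = k * A := by
      have := congrArg (k * ·) h1
      simpa [mul_add] using this
    have H2 : k * rsH + k * br = k * (Dd k fH / k) + k := by
      have := congrArg (k * ·) h2
      simpa [mul_add] using this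
    have H3 : k * rsT + k * br = k * (Dd k fT / k) + k := by
      have := congrArg (k * ·) h3
      simpa [mul_add] using this
    have H4 : k * br ≤ k := by
      calc k * br ≤ k * 1 := Nat.mul_le_mul_left _ h4
        _ = k := Nat.mul_one k
    have H5 : ρ = 0 → k * br = k := fun h0 => by rw [h5 h0, Nat.mul_one]
    have H6 : Nat.card E' + (k * (Dd k fH / k) + ρ + (k * (Dd k fT / k) + ρ + (k - ρ)))
        = k * A := by
      rw [← h7, ← h8]
      exact h6
    exact arith6 H1 H2 H3 H4 H5 H6 h9

end

end CONS


lemma cast_bound {x n k : ℕ} (hk : 0 < k) (h1 : k * x < n + k) (h2 : n < k * x + k) :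
    |(x : ℝ) - (n : ℝ) / (k : ℝ)| < 1 := by
  have hk' : (0:ℝ) < k := by exact_mod_cast hk
  have h1' : (k:ℝ) * x < n + k := by exact_mod_cast h1
  have h2' : (n:ℝ) < k * x + k := by exact_mod_cast h2
  rw [abs_lt]
  constructor
  · have h3 : (n:ℝ)/k < x + 1 := by
      rw [div_lt_iff₀ hk']
      calc (n:ℝ) < k * x + k := h2'
        _ = (x + 1) * k := by ring
    linarith
  · have h3 : (x:ℝ) < n/k + 1 := by
      have hxk : (x:ℝ) * k < n + k := by
        calc (x:ℝ)*k = k*x := by ring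
          _ < n + k := h1'
      rw [show (n:ℝ)/k + 1 = (n + k)/k by field_simp, lt_div_iff₀ hk']
      exact hxk
    linarith

/-- Directed equitable factorization with, in addition, equitable edge counts. -/
theorem directed_equitable_factorization_sizes [Fintype V] [Fintype E] [DecidableEq V]
    (ends : E → V × V) (k : ℕ) (hk : 0 < k) :
    ∃ c : E → Fin k,
      (∀ v : V, ∀ i : Fin k,
        (|((outdeg ends (univ.filter fun e => c e = i) v : ℝ)) -
            (outdeg ends univ v : ℝ) / (k : ℝ)| < 1) ∧
        (|((indeg ends (univ.filter fun e => c e = i) v : ℝ)) -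
            (indeg ends univ v : ℝ) / (k : ℝ)| < 1)) ∧
      (∀ i : Fin k,
        |(((univ.filter fun e : E => c e = i).card : ℝ)) -
          (Fintype.card E : ℝ) / (k : ℝ)| < 1) := by
  obtain ⟨c, hout, hin, hsize⟩ := CONS.aux (fun e => (ends e).1) (fun e => (ends e).2) hk
  refine ⟨c, fun v i => ⟨?_, ?_⟩, fun i => ?_⟩
  · have h := hout v i
    have e1 : outdeg ends (univ.filter fun e => c e = i) v
        = Nat.card {e // (ends e).1 = v ∧ c e = i} := by
      unfold outdeg
      rw [Finset.filter_filter, DEF.filter_card_eq_ncard]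
      exact DEF.ncard_congr_iff (fun e => and_comm)
    have e2 : outdeg ends univ v = CONS.deg (fun e => (ends e).1) v := by
      unfold outdeg CONS.deg
      rw [DEF.filter_card_eq_ncard]
    rw [e1, e2]
    exact cast_bound hk h.1 h.2
  · have h := hin v i
    have e1 : indeg ends (univ.filter fun e => c e = i) v
        = Nat.card {e // (ends e).2 = v ∧ c e = i} := by
      unfold indeg
      rw [Finset.filter_filter, DEF.filter_card_eq_ncard]
      exact DEF.ncard_congr_iff (fun e => and_comm)
    have e2 : indeg ends univ v = CONS.deg (fun e => (ends e).2) v := by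
      unfold indeg CONS.deg
      rw [DEF.filter_card_eq_ncard]
    rw [e1, e2]
    exact cast_bound hk h.1 h.2
  · have h := hsize i
    have e1 : (univ.filter fun e : E => c e = i).card = Nat.card {e // c e = i} :=
      DEF.filter_card_eq_ncard
    have e2 : (Fintype.card E : ℕ) = Nat.card E := Nat.card_eq_fintype_card.symm
    rw [e1, e2]
    exact cast_bound hk h.1 h.2
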